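/- Fix a real number a with 2/3 < a < 1 and 0 < ε < 1, and consider bootstrap percolation on Q_n with infection threshold ⌈n^a⌉ where each vertex is initially infected independently with probability p = (1 − ε)·n^{a-1}. Then the probability that the initially infected set percolates tends to 0 as n → ∞. -/

import Mathlib

open Finset Filter
open scoped Classical

noncomputable section

/-- The infected set after `i` steps of `r`-neighbour bootstrap percolation on the graph `G`,
starting from the initial infected set `A0`:
`A_{i+1} = A_i ∪ {v : |N(v) ∩ A_i| ≥ r}`. -/
def bootSets {V : Type*} [Fintype V] [DecidableEq V] (G : SimpleGraph V) (r : ℕ)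
    (A0 : Finset V) : ℕ → Finset V
  | 0 => A0
  | i + 1 =>
      bootSets G r A0 i ∪
        Finset.univ.filter fun v => r ≤ (G.neighborFinset v ∩ bootSets G r A0 i).card

/-- `A0` percolates under the `r`-neighbour bootstrap process on `G`. -/
def percolates {V : Type*} [Fintype V] [DecidableEq V] (G : SimpleGraph V) (r : ℕ)
    (A0 : Finset V) : Prop :=
  ∃ i, bootSets G r A0 i = Finset.univ

/-- The probability that the initial infected set is exactly `A`, when every vertex is
infected independently with probability `p`. -/
def configProb {V : Type*} [Fintype V] [DecidableEq V] (p : ℝ) (A : Finset V) : ℝ :=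
  p ^ A.card * (1 - p) ^ (Fintype.card V - A.card)

/-- The probability of the event `E` about the initial infected set, when every vertex is
infected independently with probability `p`. -/
def probEvent {V : Type*} [Fintype V] [DecidableEq V] (p : ℝ) (E : Finset V → Prop) : ℝ :=
  ∑ A : Finset V, if E A then configProb p A else 0

/-- The generalized hypercube `Q_{k,n}`: vertices are `{0,1}^n`, two vertices being adjacent
iff their Hamming distance is between `1` and `k`.  The usual hypercube `Q_n` is
`cubeGraph n 1`. -/
def cubeGraph (n k : ℕ) : SimpleGraph (Fin n → Bool) where
  Adj x y := 1 ≤ hammingDist x y ∧ hammingDist x y ≤ k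
  symm := by
    constructor
    intro x y h
    try dsimp only at h ⊢
    rwa [hammingDist_comm]
  loopless := by
    constructor
    intro x h
    simp [hammingDist_self] at h

/-- The critical probability for `r`-neighbour bootstrap percolation on `Q_{k,n}` where every
vertex is initially infected independently with probability `p`:
the supremum of all `p ∈ (0,1)` for which percolation has probability at most `1/2`. -/
def critProb (n k r : ℕ) : ℝ :=
  sSup {p : ℝ | p ∈ Set.Ioo (0 : ℝ) 1 ∧
    probEvent p (fun A0 => percolates (cubeGraph n k) r A0) ≤ 1 / 2}

/-- The `Boot1(t)` process with base threshold `r`: at step `1` the threshold is `r - t`,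
afterwards it is `r`. -/
def boot1Sets {V : Type*} [Fintype V] [DecidableEq V] (G : SimpleGraph V) (r t : ℕ)
    (A0 : Finset V) : ℕ → Finset V
  | 0 => A0
  | 1 => A0 ∪ Finset.univ.filter fun v => r - t ≤ (G.neighborFinset v ∩ A0).card
  | i + 2 =>
      boot1Sets G r t A0 (i + 1) ∪
        Finset.univ.filter fun v =>
          r ≤ (G.neighborFinset v ∩ boot1Sets G r t A0 (i + 1)).card

/-- The `Boot2(t)` (= `Boot3(t)`) process with base threshold `r`: at step `1` the threshold
is `r - 2t`, at step `2` it is `r - t`, and afterwards it is `r`. -/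
def boot2Sets {V : Type*} [Fintype V] [DecidableEq V] (G : SimpleGraph V) (r t : ℕ)
    (A0 : Finset V) : ℕ → Finset V
  | 0 => A0
  | 1 => A0 ∪ Finset.univ.filter fun v => r - 2 * t ≤ (G.neighborFinset v ∩ A0).card
  | 2 =>
      boot2Sets G r t A0 1 ∪
        Finset.univ.filter fun v =>
          r - t ≤ (G.neighborFinset v ∩ boot2Sets G r t A0 1).card
  | i + 3 =>
      boot2Sets G r t A0 (i + 2) ∪
        Finset.univ.filter fun v =>
          r ≤ (G.neighborFinset v ∩ boot2Sets G r t A0 (i + 2)).card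

section Aux

set_option maxHeartbeats 1000000

section ProbLemmas
variable {V : Type*} [Fintype V] [DecidableEq V] {p : ℝ}

lemma master_sum (g h : V → ℝ) :
    ∑ A : Finset V, (∏ v ∈ A, g v) * ∏ v ∈ Aᶜ, h v = ∏ v : V, (g v + h v) := by
  rw [Finset.prod_add]
  rw [← Finset.powerset_univ]
  apply Finset.sum_congr rfl
  intro A _
  rw [Finset.compl_eq_univ_sdiff]

lemma configProb_eq_prod (p : ℝ) (A : Finset V) :
    configProb p A = (∏ _v ∈ A, p) * ∏ _v ∈ Aᶜ, (1 - p) := by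
  simp [configProb, Finset.prod_const, Finset.card_compl]

lemma configProb_nonneg (hp0 : 0 ≤ p) (hp1 : p ≤ 1) (A : Finset V) : 0 ≤ configProb p A := by
  have h1 : (0:ℝ) ≤ 1 - p := by linarith
  exact mul_nonneg (pow_nonneg hp0 _) (pow_nonneg h1 _)

lemma sum_configProb_mul (p : ℝ) (w : V → ℝ) :
    ∑ A : Finset V, configProb p A * ∏ v ∈ A, w v = ∏ v : V, (p * w v + (1 - p)) := by
  rw [← master_sum (fun v => p * w v) (fun _ => 1 - p)]
  apply Finset.sum_congr rfl
  intro A _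
  rw [configProb_eq_prod, Finset.prod_mul_distrib]
  ring

lemma sum_configProb (hp : True) : ∑ A : Finset V, configProb p A = 1 := by
  have := sum_configProb_mul (V := V) p (fun _ => 1)
  simpa using this

lemma probEvent_nonneg (hp0 : 0 ≤ p) (hp1 : p ≤ 1) (E : Finset V → Prop) :
    0 ≤ probEvent p E := by
  apply Finset.sum_nonneg
  intro A _
  split
  · exact configProb_nonneg hp0 hp1 A
  · exact le_refl 0

lemma probEvent_mono (hp0 : 0 ≤ p) (hp1 : p ≤ 1) {E F : Finset V → Prop}
    (h : ∀ A, E A → F A) : probEvent p E ≤ probEvent p F := by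
  apply Finset.sum_le_sum
  intro A _
  by_cases hE : E A
  · rw [if_pos hE, if_pos (h A hE)]
  · rw [if_neg hE]
    split
    · exact configProb_nonneg hp0 hp1 A
    · exact le_refl 0

lemma probEvent_or (hp0 : 0 ≤ p) (hp1 : p ≤ 1) (E F : Finset V → Prop) :
    probEvent p (fun A => E A ∨ F A) ≤ probEvent p E + probEvent p F := by
  unfold probEvent
  rw [← Finset.sum_add_distrib]
  apply Finset.sum_le_sum
  intro A _
  have hc := configProb_nonneg hp0 hp1 A
  by_cases hE : E A
  · rw [if_pos (Or.inl hE), if_pos hE]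
    split <;> linarith
  · by_cases hF : F A
    · rw [if_pos (Or.inr hF), if_neg hE, if_pos hF]; linarith
    · rw [if_neg (by tauto), if_neg hE, if_neg hF]; linarith

lemma probEvent_exists (hp0 : 0 ≤ p) (hp1 : p ≤ 1) {ι : Type*} (s : Finset ι)
    (E : ι → Finset V → Prop) :
    probEvent p (fun A => ∃ i ∈ s, E i A) ≤ ∑ i ∈ s, probEvent p (E i) := by
  unfold probEvent
  rw [Finset.sum_comm]
  apply Finset.sum_le_sum
  intro A _
  have hc := configProb_nonneg hp0 hp1 A
  by_cases hE : ∃ i ∈ s, E i A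
  · rw [if_pos hE]
    obtain ⟨i, hi, hEi⟩ := hE
    calc configProb p A = (if E i A then configProb p A else 0) := by rw [if_pos hEi]
    _ ≤ ∑ i ∈ s, if E i A then configProb p A else 0 := by
        apply Finset.single_le_sum (fun j _ => ?_) hi
        split
        · exact hc
        · exact le_refl 0
  · rw [if_neg hE]
    apply Finset.sum_nonneg
    intro i _
    split
    · exact hc
    · exact le_refl 0

lemma probEvent_mem (hp0 : 0 ≤ p) (hp1 : p ≤ 1) (v₀ : V) :
    probEvent p (fun A => v₀ ∈ A) = p := by
  have hdef : probEvent p (fun A => v₀ ∈ A) = ∑ A : Finset V,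
      (configProb p A - configProb p A * ∏ v ∈ A, (if v = v₀ then (0:ℝ) else 1)) := by
    unfold probEvent
    apply Finset.sum_congr rfl
    intro A _
    by_cases hv : v₀ ∈ A
    · rw [if_pos hv, Finset.prod_eq_zero hv (show (if v₀ = v₀ then (0:ℝ) else 1) = 0 from if_pos rfl)]
      ring
    · rw [if_neg hv, Finset.prod_eq_one (fun v hvA => if_neg (by rintro rfl; exact hv hvA))]
      ring
  rw [hdef, Finset.sum_sub_distrib,
    sum_configProb trivial, sum_configProb_mul]
  have : ∀ v : V, (p * (if v = v₀ then (0:ℝ) else 1) + (1 - p))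
      = if v = v₀ then (1 - p) else 1 := by
    intro v; split <;> ring
  rw [Finset.prod_congr rfl (fun v _ => this v)]
  rw [Finset.prod_ite_eq' Finset.univ v₀ (fun _ => (1-p:ℝ))]
  simp

lemma probEvent_le_of_witness (E : Finset V → Prop) (w : V → ℝ) (hw : ∀ v, 1 ≤ w v)
    (M : ℝ) (hM : 0 < M) (hp0 : 0 ≤ p) (hp1 : p ≤ 1)
    (hE : ∀ A : Finset V, E A → M ≤ ∏ v ∈ A, w v) :
    probEvent p E ≤ M⁻¹ * ∏ v : V, (p * w v + (1 - p)) := by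
  rw [← sum_configProb_mul, Finset.mul_sum]
  apply Finset.sum_le_sum
  intro A _
  have hc := configProb_nonneg hp0 hp1 A
  have hwA : (0:ℝ) ≤ ∏ v ∈ A, w v :=
    Finset.prod_nonneg (fun v _ => le_trans zero_le_one (hw v))
  by_cases hEA : E A
  · rw [if_pos hEA]
    have h1 : (1:ℝ) ≤ M⁻¹ * ∏ v ∈ A, w v := by
      rw [← inv_mul_cancel₀ (ne_of_gt hM)]
      exact mul_le_mul_of_nonneg_left (hE A hEA) (inv_nonneg.mpr hM.le)
    calc configProb p A = configProb p A * 1 := by ring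
    _ ≤ configProb p A * (M⁻¹ * ∏ v ∈ A, w v) := by
        apply mul_le_mul_of_nonneg_left h1 hc
    _ = M⁻¹ * (configProb p A * ∏ v ∈ A, w v) := by ring
  · rw [if_neg hEA]
    positivity

lemma chernoff (hp0 : 0 ≤ p) (hp1 : p ≤ 1) (θ Z k : ℝ) (hθ : 0 ≤ θ) (c : V → ℕ)
    (hconv : ∀ x : V, Real.exp (θ * c x) ≤ 1 + (c x : ℝ) * Z)
    (E : Finset V → Prop) (hE : ∀ A : Finset V, E A → k ≤ ∑ x ∈ A, (c x : ℝ)) :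
    probEvent p E ≤ Real.exp (p * Z * (∑ x : V, (c x : ℝ)) - θ * k) := by
  have hbound := probEvent_le_of_witness E (fun x => Real.exp (θ * c x))
    (fun x => by
      rw [show (1:ℝ) = Real.exp 0 from (Real.exp_zero).symm]
      exact Real.exp_le_exp.mpr (by positivity))
    (Real.exp (θ * k)) (Real.exp_pos _) hp0 hp1 ?_
  · refine hbound.trans ?_
    have hfac : ∀ x : V, p * Real.exp (θ * c x) + (1 - p) ≤ Real.exp (p * Z * c x) := by
      intro x
      have h2 := Real.add_one_le_exp (p * Z * (c x : ℝ))
      have h3 := hconv x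
      nlinarith
    have hprodle : (∏ v : V, (p * Real.exp (θ * c v) + (1 - p)))
        ≤ ∏ v : V, Real.exp (p * Z * c v) := by
      apply Finset.prod_le_prod
      · intro x _
        have h1 : (1:ℝ) ≤ Real.exp (θ * c x) := by
          rw [show (1:ℝ) = Real.exp 0 from (Real.exp_zero).symm]
          exact Real.exp_le_exp.mpr (by positivity)
        nlinarith
      · intro x _; exact hfac x
    calc (Real.exp (θ * k))⁻¹ * ∏ v : V, (p * Real.exp (θ * c v) + (1 - p))
        ≤ (Real.exp (θ * k))⁻¹ * ∏ v : V, Real.exp (p * Z * c v) := by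
          apply mul_le_mul_of_nonneg_left hprodle (by positivity)
      _ = Real.exp (p * Z * (∑ x : V, (c x : ℝ)) - θ * k) := by
          rw [← Real.exp_sum, ← Real.exp_neg, ← Real.exp_add]
          congr 1
          rw [Finset.mul_sum]
          ring
  · intro A hEA
    have heq : (∏ v ∈ A, Real.exp (θ * c v)) = Real.exp (θ * ∑ x ∈ A, (c x : ℝ)) := by
      rw [← Real.exp_sum]
      congr 1
      rw [Finset.mul_sum]
    rw [heq]
    exact Real.exp_le_exp.mpr (mul_le_mul_of_nonneg_left (hE A hEA) hθ)

end ProbLemmas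


section Cube
variable {n : ℕ}

lemma cube_adj (x y : Fin n → Bool) : (cubeGraph n 1).Adj x y ↔ hammingDist x y = 1 := by
  constructor
  · rintro ⟨h1, h2⟩; omega
  · intro h; exact ⟨h.ge, h.le⟩

def bflip (v : Fin n → Bool) (i : Fin n) : Fin n → Bool := fun j => if j = i then !(v j) else v j

lemma hdist_one (v u : Fin n → Bool) (h : hammingDist v u = 1) :
    ∃ i, u = bflip v i ∧ v i ≠ u i := by
  have hT : (univ.filter fun j => v j ≠ u j).card = 1 := h
  obtain ⟨i, hi⟩ := Finset.card_eq_one.mp hT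
  have hmem : ∀ j, v j ≠ u j ↔ j = i := by
    intro j
    constructor
    · intro hj
      have : j ∈ univ.filter fun j => v j ≠ u j := Finset.mem_filter.mpr ⟨Finset.mem_univ _, hj⟩
      rw [hi, Finset.mem_singleton] at this
      exact this
    · rintro rfl
      have hmm : j ∈ ({j} : Finset (Fin n)) := Finset.mem_singleton_self j
      rw [← hi, Finset.mem_filter] at hmm
      exact hmm.2
  refine ⟨i, ?_, (hmem i).mpr rfl⟩
  funext j
  by_cases hj : j = i
  · subst hj
    have hne : v j ≠ u j := (hmem j).mpr rfl
    have : u j = !(v j) := by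
      cases hvj : v j <;> cases huj : u j <;> simp_all
    simp [bflip, this]
  · have : ¬(v j ≠ u j) := fun hc => hj ((hmem j).mp hc)
    push_neg at this
    simp [bflip, hj, this]

lemma card_nbhd_le (v : Fin n → Bool) : ((cubeGraph n 1).neighborFinset v).card ≤ n := by
  have hsub : (cubeGraph n 1).neighborFinset v ⊆ univ.image (bflip v) := by
    intro u hu
    rw [SimpleGraph.mem_neighborFinset, cube_adj] at hu
    obtain ⟨i, hflip, -⟩ := hdist_one v u hu
    exact Finset.mem_image.mpr ⟨i, Finset.mem_univ _, hflip.symm⟩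
  calc ((cubeGraph n 1).neighborFinset v).card ≤ (univ.image (bflip v)).card :=
        Finset.card_le_card hsub
    _ ≤ (univ : Finset (Fin n)).card := Finset.card_image_le
    _ = n := by simp

lemma common_le_two (v w : Fin n → Bool) (hw : w ≠ v) :
    ((univ : Finset (Fin n → Bool)).filter
      fun u => hammingDist v u = 1 ∧ hammingDist u w = 1).card ≤ 2 := by
  set Sf := (univ : Finset (Fin n → Bool)).filter
      fun u => hammingDist v u = 1 ∧ hammingDist u w = 1 with hSf
  rcases Finset.eq_empty_or_nonempty Sf with he | hne
  · rw [he]; simp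
  obtain ⟨u₀, hu₀⟩ := hne
  have hu₀' := (Finset.mem_filter.mp hu₀).2
  have hvw2 : hammingDist v w ≤ 2 := by
    have := hammingDist_triangle v u₀ w
    omega
  set T := (univ : Finset (Fin n)).filter fun i => v i ≠ w i with hT
  have hTcard : T.card = hammingDist v w := rfl
  have hsub : Sf ⊆ T.image (bflip v) := by
    intro u hu
    obtain ⟨-, h1, h2⟩ := Finset.mem_filter.mp hu
    obtain ⟨i, hflip, hnei⟩ := hdist_one v u h1
    refine Finset.mem_image.mpr ⟨i, ?_, hflip.symm⟩
    rw [hT, Finset.mem_filter]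
    refine ⟨Finset.mem_univ _, ?_⟩
    intro hvwi
    apply hw
    -- derive w = v
    have huw : u i ≠ w i := by
      rw [← hvwi]
      exact fun hc => hnei hc.symm
    obtain ⟨j, hwflip, hnej⟩ := hdist_one u w h2
    have hmemj : ∀ m, u m ≠ w m ↔ m = j := by
      intro m
      constructor
      · intro hm
        by_contra hmj
        have : w m = u m := by
          rw [hwflip]; simp [bflip, hmj]
        exact hm this.symm
      · rintro rfl; exact hnej
    have hij : i = j := (hmemj i).mp huw
    subst hij
    funext m
    by_cases hmi : m = i
    · subst hmi; exact hvwi.symm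
    · have h3 : u m = w m := by
        by_contra hc
        exact hmi ((hmemj m).mp hc)
      have h4 : u m = v m := by
        rw [hflip]; simp [bflip, hmi]
      rw [← h3, h4]
  calc Sf.card ≤ (T.image (bflip v)).card := Finset.card_le_card hsub
    _ ≤ T.card := Finset.card_image_le
    _ ≤ 2 := by omega

end Cube



lemma boot_blocked {V : Type*} [Fintype V] [DecidableEq V] (G : SimpleGraph V) (r t : ℕ)
    (A : Finset V)
    (hb : ∀ v : V, ((G.neighborFinset v) ∩
      (univ.filter fun u => r - t ≤ ((G.neighborFinset u) ∩ A).card)).card < t) :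
    ∀ i, bootSets G r A i ⊆
      A ∪ (univ.filter fun u => r - t ≤ ((G.neighborFinset u) ∩ A).card) := by
  set W := (univ.filter fun u => r - t ≤ ((G.neighborFinset u) ∩ A).card) with hW
  intro i
  induction i with
  | zero => exact Finset.subset_union_left
  | succ i ih =>
    rw [bootSets]
    apply Finset.union_subset ih
    intro v hv
    have hr : r ≤ ((G.neighborFinset v) ∩ bootSets G r A i).card := (Finset.mem_filter.mp hv).2
    have h1 : (G.neighborFinset v) ∩ bootSets G r A i ⊆
        ((G.neighborFinset v) ∩ A) ∪ ((G.neighborFinset v) ∩ W) := by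
      intro x hx
      obtain ⟨hx1, hx2⟩ := Finset.mem_inter.mp hx
      rcases Finset.mem_union.mp (ih hx2) with h | h
      · exact Finset.mem_union_left _ (Finset.mem_inter.mpr ⟨hx1, h⟩)
      · exact Finset.mem_union_right _ (Finset.mem_inter.mpr ⟨hx1, h⟩)
    have h2 : r ≤ ((G.neighborFinset v) ∩ A).card + ((G.neighborFinset v) ∩ W).card :=
      hr.trans ((Finset.card_le_card h1).trans (Finset.card_union_le _ _))
    have h3 := hb v
    apply Finset.mem_union_right
    rw [hW, Finset.mem_filter]
    exact ⟨Finset.mem_univ _, by omega⟩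

lemma percolates_blocked {V : Type*} [Fintype V] [DecidableEq V] (G : SimpleGraph V) (r t : ℕ)
    (A : Finset V) (v₀ : V)
    (hperc : percolates G r A)
    (hb : ∀ v : V, ((G.neighborFinset v) ∩
      (univ.filter fun u => r - t ≤ ((G.neighborFinset u) ∩ A).card)).card < t) :
    v₀ ∈ A ∨ r - t ≤ ((G.neighborFinset v₀) ∩ A).card := by
  obtain ⟨i, hi⟩ := hperc
  have := boot_blocked G r t A hb i
  rw [hi] at this
  rcases Finset.mem_union.mp (this (Finset.mem_univ v₀)) with h | h
  · exact Or.inl h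
  · exact Or.inr (Finset.mem_filter.mp h).2



section MainBound
variable {n : ℕ}

lemma main_bound (a ε : ℝ) (hε₀ : 0 < ε) (hε₁ : ε < 1) (n : ℕ) (hn : 1 ≤ n)
    (ha : a - 1 ≤ 0)
    (r t : ℕ) (hrt : t ≤ r) (hr : (n:ℝ)^a ≤ (r:ℝ)) :
    probEvent ((1 - ε) * (n:ℝ)^(a-1))
      (fun A0 : Finset (Fin n → Bool) => percolates (cubeGraph n 1) r A0)
    ≤ (1 - ε) * (n:ℝ)^(a-1)
      + Real.exp (ε * (n:ℝ)^a - (-Real.log (1-ε)) * ((r:ℝ) - t))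
      + (2:ℝ)^n * ((2:ℝ)^n * Real.exp ((t:ℝ)/2 *
          (ε * (n:ℝ)^a - (-Real.log (1-ε)) * ((r:ℝ) - t - 1)))) := by
  have h1ε : (0:ℝ) < 1 - ε := by linarith
  have hn1 : (1:ℝ) ≤ (n:ℝ) := by exact_mod_cast hn
  have hn0 : (0:ℝ) < (n:ℝ) := by linarith
  set L : ℝ := -Real.log (1-ε) with hLdef
  have heL : Real.exp L = (1-ε)⁻¹ := by
    rw [hLdef, Real.exp_neg, Real.exp_log h1ε]
  have hL0 : 0 < L := by
    rw [hLdef, neg_pos]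
    exact Real.log_neg h1ε (by linarith)
  set p : ℝ := (1 - ε) * (n:ℝ)^(a-1) with hpdef
  have hp0 : 0 ≤ p := by
    apply mul_nonneg (by linarith)
    exact Real.rpow_nonneg hn0.le _
  have hp1 : p ≤ 1 := by
    have h1 : (n:ℝ)^(a-1) ≤ 1 := Real.rpow_le_one_of_one_le_of_nonpos hn1 ha
    have h2 : (0:ℝ) ≤ (n:ℝ)^(a-1) := Real.rpow_nonneg hn0.le _
    nlinarith
  have hpn : p * (n:ℝ) = (1 - ε) * (n:ℝ)^a := by
    rw [hpdef]
    have : (n:ℝ)^(a-1) * (n:ℝ) = (n:ℝ)^a := by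
      nth_rewrite 2 [show (n:ℝ) = (n:ℝ)^(1:ℝ) from (Real.rpow_one _).symm]
      rw [← Real.rpow_add hn0]
      norm_num
    rw [mul_assoc, this]
  have hZ0 : 0 ≤ Real.exp L - 1 := by
    have : Real.exp 0 ≤ Real.exp L := Real.exp_le_exp.mpr hL0.le
    rw [Real.exp_zero] at this
    linarith
  have hpZn : p * (Real.exp L - 1) * (n:ℝ) = ε * (n:ℝ)^a := by
    rw [heL]
    have h2 : p * ((1-ε)⁻¹ - 1) * (n:ℝ) = ((1-ε)⁻¹ - 1) * (p * (n:ℝ)) := by ring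
    rw [h2, hpn]
    field_simp
    ring
  set Gc := cubeGraph n 1 with hGc
  set v₀ : Fin n → Bool := fun _ => false with hv₀
  -- the three events
  set E1 : Finset (Fin n → Bool) → Prop := fun A =>
    ∃ v ∈ (univ : Finset (Fin n → Bool)), ∃ S ∈ Finset.powersetCard t (Gc.neighborFinset v),
      ∀ u ∈ S, r - t ≤ ((Gc.neighborFinset u) ∩ A).card with hE1
  set E2 : Finset (Fin n → Bool) → Prop := fun A => v₀ ∈ A with hE2
  set E3 : Finset (Fin n → Bool) → Prop := fun A =>
    r - t ≤ ((Gc.neighborFinset v₀) ∩ A).card with hE3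
  have hdecomp : ∀ A : Finset (Fin n → Bool), percolates Gc r A → (E1 A ∨ (E2 A ∨ E3 A)) := by
    intro A hperc
    by_cases hb : ∀ v : Fin n → Bool, ((Gc.neighborFinset v) ∩
        (univ.filter fun u => r - t ≤ ((Gc.neighborFinset u) ∩ A).card)).card < t
    · rcases percolates_blocked Gc r t A v₀ hperc hb with h | h
      · exact Or.inr (Or.inl h)
      · exact Or.inr (Or.inr h)
    · left
      push_neg at hb
      obtain ⟨v, hv⟩ := hb
      obtain ⟨S, hS1, hS2⟩ := Finset.exists_subset_card_eq hv
      refine ⟨v, Finset.mem_univ _, S, ?_, ?_⟩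
      · exact Finset.mem_powersetCard.mpr
          ⟨hS1.trans Finset.inter_subset_left, hS2⟩
      · intro u hu
        have := hS1 hu
        exact (Finset.mem_filter.mp (Finset.mem_inter.mp this).2).2
  have step1 : probEvent p (fun A0 : Finset (Fin n → Bool) => percolates Gc r A0)
      ≤ probEvent p E1 + (probEvent p E2 + probEvent p E3) := by
    calc probEvent p (fun A0 : Finset (Fin n → Bool) => percolates Gc r A0)
        ≤ probEvent p (fun A => E1 A ∨ (E2 A ∨ E3 A)) := probEvent_mono hp0 hp1 hdecomp
      _ ≤ probEvent p E1 + probEvent p (fun A => E2 A ∨ E3 A) :=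
          probEvent_or hp0 hp1 _ _
      _ ≤ probEvent p E1 + (probEvent p E2 + probEvent p E3) := by
          have := probEvent_or (V := Fin n → Bool) hp0 hp1 E2 E3
          linarith
  -- bound on E2
  have hbE2 : probEvent p E2 = p := probEvent_mem hp0 hp1 v₀
  -- bound on E3
  have hbE3 : probEvent p E3 ≤ Real.exp (ε * (n:ℝ)^a - L * ((r:ℝ) - t)) := by
    have hch := chernoff hp0 hp1 L (Real.exp L - 1) ((r:ℝ) - t) hL0.le
      (fun x => if x ∈ Gc.neighborFinset v₀ then 1 else 0)
      (fun x => by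
        by_cases hx : x ∈ Gc.neighborFinset v₀
        · simp [hx]
        · simp [hx])
      E3
      (fun A hA => by
        rw [hE3] at hA
        have hcast : ((r - t : ℕ) : ℝ) = (r:ℝ) - t := by
          push_cast [hrt]
          ring
        have hsum : ∑ x ∈ A, (((if x ∈ Gc.neighborFinset v₀ then 1 else 0 : ℕ)) : ℝ)
            = ((Gc.neighborFinset v₀ ∩ A).card : ℝ) := by
          rw [Finset.inter_comm, ← Finset.filter_mem_eq_inter, Finset.card_filter]
          push_cast
          rfl
        rw [hsum]
        rw [← hcast]
        exact_mod_cast hA)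
    refine hch.trans ?_
    apply Real.exp_le_exp.mpr
    have hsumall : ∑ x : Fin n → Bool, (((if x ∈ Gc.neighborFinset v₀ then 1 else 0 : ℕ)) : ℝ)
        = ((Gc.neighborFinset v₀).card : ℝ) := by
      push_cast
      rw [Finset.sum_boole, Finset.filter_mem_eq_inter, Finset.univ_inter]
    rw [hsumall]
    have hcard : ((Gc.neighborFinset v₀).card : ℝ) ≤ (n:ℝ) := by
      rw [hGc]
      exact_mod_cast card_nbhd_le v₀
    have hcard0 : (0:ℝ) ≤ ((Gc.neighborFinset v₀).card : ℝ) := Nat.cast_nonneg _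
    have hmono : p * (Real.exp L - 1) * ((Gc.neighborFinset v₀).card : ℝ)
        ≤ p * (Real.exp L - 1) * (n:ℝ) :=
      mul_le_mul_of_nonneg_left hcard (mul_nonneg hp0 hZ0)
    rw [hpZn] at hmono
    linarith
  -- bound on E1
  set Bexp : ℝ := Real.exp ((t:ℝ)/2 * (ε * (n:ℝ)^a - L * ((r:ℝ) - t - 1))) with hBexp
  have hFS : ∀ v : Fin n → Bool, ∀ S ∈ Finset.powersetCard t (Gc.neighborFinset v),
      probEvent p (fun A => ∀ u ∈ S, r - t ≤ ((Gc.neighborFinset u) ∩ A).card) ≤ Bexp := by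
    intro v S hS
    obtain ⟨hSsub, hScard⟩ := Finset.mem_powersetCard.mp hS
    set c : (Fin n → Bool) → ℕ :=
      fun x => (S.filter fun u => x ∈ Gc.neighborFinset u \ {v}).card with hc
    have hc2 : ∀ x, c x ≤ 2 := by
      intro x
      by_cases hxv : x = v
      · have hzero : (S.filter fun u => x ∈ Gc.neighborFinset u \ {v}).card = 0 := by
          rw [Finset.card_eq_zero, Finset.filter_eq_empty_iff]
          intro u _
          rw [Finset.mem_sdiff]
          rintro ⟨-, hmem⟩
          rw [hxv] at hmem
          exact hmem (Finset.mem_singleton_self v)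
        have hzero2 : c x = 0 := hzero
        omega
      · have hsub2 : (S.filter fun u => x ∈ Gc.neighborFinset u \ {v}) ⊆
            (univ : Finset (Fin n → Bool)).filter
              (fun u => hammingDist v u = 1 ∧ hammingDist u x = 1) := by
          intro u hu
          obtain ⟨huS, hux⟩ := Finset.mem_filter.mp hu
          refine Finset.mem_filter.mpr ⟨Finset.mem_univ _, ?_, ?_⟩
          · have := hSsub huS
            rw [hGc, SimpleGraph.mem_neighborFinset, cube_adj] at this
            exact this
          · have := (Finset.mem_sdiff.mp hux).1
            rw [hGc, SimpleGraph.mem_neighborFinset, cube_adj] at this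
            exact this
        calc c x ≤ ((univ : Finset (Fin n → Bool)).filter
              (fun u => hammingDist v u = 1 ∧ hammingDist u x = 1)).card :=
              Finset.card_le_card hsub2
          _ ≤ 2 := common_le_two v x hxv
    have hexpL : Real.exp (L/2) * Real.exp (L/2) = Real.exp L := by
      rw [← Real.exp_add]; ring_nf
    have hdouble : ∀ A : Finset (Fin n → Bool), ∑ x ∈ A, c x
        = ∑ u ∈ S, (A.filter (fun x => x ∈ Gc.neighborFinset u \ {v})).card := by
      intro A
      rw [hc]
      simp only [Finset.card_filter]
      rw [Finset.sum_comm]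
    have hch := chernoff hp0 hp1 (L/2) ((Real.exp L - 1)/2) ((t:ℝ) * ((r:ℝ) - t - 1))
      (by linarith : (0:ℝ) ≤ L/2) c
      (fun x => by
        have hm := hc2 x
        interval_cases hcx : (c x)
        · norm_num
        · push_cast
          rw [mul_one]
          nlinarith [sq_nonneg (Real.exp (L/2) - 1), hexpL]
        · push_cast
          rw [show L/2 * 2 = L by ring]
          ring_nf
          nlinarith [hexpL])
      (fun A => ∀ u ∈ S, r - t ≤ ((Gc.neighborFinset u) ∩ A).card)
      (fun A hA => by
        have hperu : ∀ u ∈ S, (r:ℝ) - t - 1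
            ≤ ((A.filter (fun x => x ∈ Gc.neighborFinset u \ {v})).card : ℝ) := by
          intro u hu
          have h1 : (Gc.neighborFinset u ∩ A) ⊆
              (A.filter (fun x => x ∈ Gc.neighborFinset u \ {v})) ∪ {v} := by
            intro x hx
            obtain ⟨hxN, hxA⟩ := Finset.mem_inter.mp hx
            by_cases hxv : x = v
            · exact Finset.mem_union_right _ (by rw [hxv]; exact Finset.mem_singleton_self v)
            · refine Finset.mem_union_left _ (Finset.mem_filter.mpr ⟨hxA, ?_⟩)
              rw [Finset.mem_sdiff]
              exact ⟨hxN, fun hc' => hxv (Finset.mem_singleton.mp hc')⟩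
          have h2 : r - t ≤ (A.filter (fun x => x ∈ Gc.neighborFinset u \ {v})).card + 1 := by
            have h3 := hA u hu
            have h4 := (Finset.card_le_card h1).trans (Finset.card_union_le _ _)
            simp only [Finset.card_singleton] at h4
            omega
          have h5 : r ≤ (A.filter (fun x => x ∈ Gc.neighborFinset u \ {v})).card + 1 + t := by
            omega
          have h6 : (r:ℝ) ≤ ((A.filter (fun x => x ∈ Gc.neighborFinset u \ {v})).card : ℝ) + 1 + t := by
            exact_mod_cast h5
          linarith
        have hsum2 : ∑ x ∈ A, ((c x : ℕ) : ℝ)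
            = ∑ u ∈ S, ((A.filter (fun x => x ∈ Gc.neighborFinset u \ {v})).card : ℝ) := by
          rw [← Nat.cast_sum, hdouble A, Nat.cast_sum]
        rw [hsum2]
        calc (t:ℝ) * ((r:ℝ) - t - 1) = ∑ _u ∈ S, ((r:ℝ) - t - 1) := by
              rw [Finset.sum_const, hScard, nsmul_eq_mul]
          _ ≤ ∑ u ∈ S, ((A.filter (fun x => x ∈ Gc.neighborFinset u \ {v})).card : ℝ) :=
              Finset.sum_le_sum hperu)
    refine hch.trans ?_
    apply Real.exp_le_exp.mpr
    have hsumall : (∑ x : Fin n → Bool, ((c x : ℕ) : ℝ)) ≤ (t:ℝ) * n := by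
      have h1 : ∑ x : Fin n → Bool, c x ≤ t * n := by
        rw [hdouble univ]
        calc ∑ u ∈ S, (univ.filter (fun x => x ∈ Gc.neighborFinset u \ {v})).card
            ≤ ∑ _u ∈ S, n := by
              apply Finset.sum_le_sum
              intro u _
              rw [Finset.filter_mem_eq_inter, Finset.univ_inter]
              calc (Gc.neighborFinset u \ {v}).card ≤ (Gc.neighborFinset u).card :=
                    Finset.card_le_card (Finset.sdiff_subset)
                _ ≤ n := by rw [hGc]; exact card_nbhd_le u
          _ = t * n := by rw [Finset.sum_const, hScard, smul_eq_mul]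
      exact_mod_cast h1
    have hmono : p * ((Real.exp L - 1)/2) * (∑ x : Fin n → Bool, ((c x : ℕ) : ℝ))
        ≤ p * ((Real.exp L - 1)/2) * ((t:ℝ) * n) := by
      exact mul_le_mul_of_nonneg_left hsumall
        (mul_nonneg hp0 (by linarith : (0:ℝ) ≤ (Real.exp L - 1)/2))
    have heq2 : p * ((Real.exp L - 1)/2) * ((t:ℝ) * n) = (t:ℝ)/2 * (ε * (n:ℝ)^a) := by
      have : p * ((Real.exp L - 1)/2) * ((t:ℝ) * n) = (t:ℝ)/2 * (p * (Real.exp L - 1) * n) := by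
        ring
      rw [this, hpZn]
    rw [heq2] at hmono
    have hfinal : (t:ℝ)/2 * (ε * (n:ℝ)^a - L * ((r:ℝ) - t - 1))
        = (t:ℝ)/2 * (ε * (n:ℝ)^a) - L/2 * ((t:ℝ) * ((r:ℝ) - t - 1)) := by ring
    rw [hfinal]
    linarith
  have hbE1 : probEvent p E1 ≤ (2:ℝ)^n * ((2:ℝ)^n * Bexp) := by
    have hBpos : 0 ≤ Bexp := (Real.exp_pos _).le
    calc probEvent p E1
        ≤ ∑ v ∈ (univ : Finset (Fin n → Bool)), probEvent p
            (fun A => ∃ S ∈ Finset.powersetCard t (Gc.neighborFinset v),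
              ∀ u ∈ S, r - t ≤ ((Gc.neighborFinset u) ∩ A).card) := by
          exact probEvent_exists hp0 hp1 univ _
      _ ≤ ∑ _v ∈ (univ : Finset (Fin n → Bool)), (2:ℝ)^n * Bexp := by
          apply Finset.sum_le_sum
          intro v _
          calc probEvent p (fun A => ∃ S ∈ Finset.powersetCard t (Gc.neighborFinset v),
                  ∀ u ∈ S, r - t ≤ ((Gc.neighborFinset u) ∩ A).card)
              ≤ ∑ S ∈ Finset.powersetCard t (Gc.neighborFinset v), probEvent p
                  (fun A => ∀ u ∈ S, r - t ≤ ((Gc.neighborFinset u) ∩ A).card) :=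
                probEvent_exists hp0 hp1 _ _
            _ ≤ ∑ _S ∈ Finset.powersetCard t (Gc.neighborFinset v), Bexp :=
                Finset.sum_le_sum (fun S hS => hFS v S hS)
            _ = ((Finset.powersetCard t (Gc.neighborFinset v)).card : ℝ) * Bexp := by
                rw [Finset.sum_const, nsmul_eq_mul]
            _ ≤ (2:ℝ)^n * Bexp := by
                apply mul_le_mul_of_nonneg_right _ hBpos
                have hsub3 : Finset.powersetCard t (Gc.neighborFinset v)
                    ⊆ (Gc.neighborFinset v).powerset := by
                  intro x hx
                  rw [Finset.mem_powerset]
                  exact (Finset.mem_powersetCard.mp hx).1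
                have h1 : (Finset.powersetCard t (Gc.neighborFinset v)).card
                    ≤ 2 ^ (Gc.neighborFinset v).card := by
                  rw [← Finset.card_powerset]
                  exact Finset.card_le_card hsub3
                have h2 : (2:ℕ) ^ (Gc.neighborFinset v).card ≤ 2 ^ n := by
                  apply Nat.pow_le_pow_right (by norm_num)
                  rw [hGc]; exact card_nbhd_le v
                calc ((Finset.powersetCard t (Gc.neighborFinset v)).card : ℝ)
                    ≤ ((2^n : ℕ) : ℝ) := by exact_mod_cast h1.trans h2
                  _ = (2:ℝ)^n := by push_cast; ring
      _ = (2:ℝ)^n * ((2:ℝ)^n * Bexp) := by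
          rw [Finset.sum_const, nsmul_eq_mul, Finset.card_univ]
          have : (Fintype.card (Fin n → Bool) : ℝ) = (2:ℝ)^n := by
            simp
          rw [this]
  rw [hbE2] at step1
  have hfin := step1.trans (by linarith : probEvent p E1 + (p + probEvent p E3)
      ≤ (2:ℝ)^n * ((2:ℝ)^n * Bexp) + (p + Real.exp (ε * (n:ℝ)^a - L * ((r:ℝ) - t))))
  calc probEvent p (fun A0 : Finset (Fin n → Bool) => percolates Gc r A0)
      ≤ (2:ℝ)^n * ((2:ℝ)^n * Bexp) + (p + Real.exp (ε * (n:ℝ)^a - L * ((r:ℝ) - t))) := hfin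
    _ = p + Real.exp (ε * (n:ℝ)^a - L * ((r:ℝ) - t))
        + (2:ℝ)^n * ((2:ℝ)^n * Bexp) := by ring

end MainBound

end Aux

set_option maxHeartbeats 1000000

/-- For `2/3 < a < 1` and `0 < ε < 1`, with initial infection probability
`p = (1-ε)n^{a-1}`, bootstrap percolation on `Q_n` with threshold `⌈n^a⌉` percolates with
probability tending to `0` as `n → ∞`. -/
theorem perc_prob_tendsto_zero (a : ℝ) (ha₁ : 2 / 3 < a) (ha₂ : a < 1) (ε : ℝ)
    (hε₀ : 0 < ε) (hε₁ : ε < 1) :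
    Filter.Tendsto
      (fun n : ℕ =>
        probEvent ((1 - ε) * (n : ℝ) ^ (a - 1))
          (fun A0 : Finset (Fin n → Bool) => percolates (cubeGraph n 1) ⌈(n : ℝ) ^ a⌉₊ A0))
      Filter.atTop (nhds 0) := by
  have h1ε : (0:ℝ) < 1 - ε := by linarith
  set L : ℝ := -Real.log (1-ε) with hLdef
  have hL0 : 0 < L := by
    rw [hLdef, neg_pos]
    exact Real.log_neg h1ε (by linarith)
  have hεL : ε < L := by
    have := Real.log_lt_sub_one_of_pos h1ε (by intro h; linarith : (1-ε) ≠ 1)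
    rw [hLdef]
    linarith
  set c : ℝ := L - ε with hcdef
  have hc0 : 0 < c := by rw [hcdef]; linarith
  set G : ℕ → ℝ := fun n => (1-ε)*(n:ℝ)^(a-1) + Real.exp (-(c/2 * (n:ℝ)^a))
      + Real.exp (Real.log 2 * (2*(n:ℕ)) - (c/4)*(n:ℝ)^((7:ℝ)/6)) with hGdef
  -- limit of G
  have hGlim : Tendsto G atTop (nhds 0) := by
    have hT1 : Tendsto (fun n : ℕ => (1-ε)*(n:ℝ)^(a-1)) atTop (nhds 0) := by
      have h1 : Tendsto (fun x : ℝ => x^(a-1)) atTop (nhds 0) := by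
        have := tendsto_rpow_neg_atTop (y := 1 - a) (by linarith)
        convert this using 2 with x
        ring_nf
      have h2 := h1.comp (tendsto_natCast_atTop_atTop (R := ℝ))
      have := h2.const_mul (1-ε)
      simpa using this
    have hT2 : Tendsto (fun n : ℕ => Real.exp (-(c/2 * (n:ℝ)^a))) atTop (nhds 0) := by
      apply Real.tendsto_exp_atBot.comp
      have h1 : Tendsto (fun n : ℕ => (n:ℝ)^a) atTop atTop :=
        (tendsto_rpow_atTop (by linarith)).comp (tendsto_natCast_atTop_atTop (R := ℝ))
      have h2 : Tendsto (fun n : ℕ => c/2 * (n:ℝ)^a) atTop atTop :=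
        h1.const_mul_atTop (by linarith)
      exact tendsto_neg_atTop_atBot.comp h2
    have hT3 : Tendsto (fun n : ℕ =>
        Real.exp (Real.log 2 * (2*(n:ℕ)) - (c/4)*(n:ℝ)^((7:ℝ)/6))) atTop (nhds 0) := by
      apply Real.tendsto_exp_atBot.comp
      have hneg : Tendsto (fun n : ℕ => -(n:ℝ)) atTop atBot :=
        tendsto_neg_atTop_atBot.comp (tendsto_natCast_atTop_atTop (R := ℝ))
      apply tendsto_atBot_mono' atTop ?_ hneg
      have h16 : Tendsto (fun n : ℕ => (n:ℝ)^((1:ℝ)/6)) atTop atTop :=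
        (tendsto_rpow_atTop (by norm_num)).comp (tendsto_natCast_atTop_atTop (R := ℝ))
      filter_upwards [h16.eventually_ge_atTop ((2*Real.log 2 + 1)*(4/c)),
        eventually_ge_atTop 1] with n h6 hn1
      have hn1' : (1:ℝ) ≤ (n:ℝ) := by exact_mod_cast hn1
      have hn0' : (0:ℝ) < (n:ℝ) := by linarith
      have hsplit : (n:ℝ)^((7:ℝ)/6) = (n:ℝ) * (n:ℝ)^((1:ℝ)/6) := by
        nth_rewrite 2 [show (n:ℝ) = (n:ℝ)^(1:ℝ) from (Real.rpow_one _).symm]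
        rw [← Real.rpow_add hn0']
        norm_num
      rw [hsplit]
      have h7 : (2*Real.log 2 + 1) * (n:ℝ) ≤ (c/4) * ((n:ℝ) * (n:ℝ)^((1:ℝ)/6)) := by
        have h8 := mul_le_mul_of_nonneg_right h6 hn0'.le
        have h9 : ((2*Real.log 2 + 1)*(4/c)) * ((c/4) * (n:ℝ)) = (2*Real.log 2 + 1) * (n:ℝ) := by
          field_simp
        nlinarith [mul_le_mul_of_nonneg_right
          (mul_le_mul_of_nonneg_right h6 (by linarith : (0:ℝ) ≤ c/4)) hn0'.le]
      linarith
    have hsum := (hT1.add hT2).add hT3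
    rw [hGdef]
    simpa using hsum
  apply squeeze_zero' ?_ ?_ hGlim
  · filter_upwards [eventually_ge_atTop 1] with n hn1
    have hn1' : (1:ℝ) ≤ (n:ℝ) := by exact_mod_cast hn1
    apply probEvent_nonneg
    · apply mul_nonneg (by linarith)
      exact Real.rpow_nonneg (by linarith) _
    · have h1 : (n:ℝ)^(a-1) ≤ 1 :=
        Real.rpow_le_one_of_one_le_of_nonpos hn1' (by linarith)
      have h2 : (0:ℝ) ≤ (n:ℝ)^(a-1) := Real.rpow_nonneg (by linarith) _
      nlinarith
  · -- main eventual bound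
    have hA12 : Tendsto (fun n : ℕ => (n:ℝ)^(a-1/2)) atTop atTop :=
      (tendsto_rpow_atTop (by linarith)).comp (tendsto_natCast_atTop_atTop (R := ℝ))
    filter_upwards [eventually_ge_atTop 1, hA12.eventually_ge_atTop (6*L/c)]
      with n hn1 hev2
    have hn1' : (1:ℝ) ≤ (n:ℝ) := by exact_mod_cast hn1
    have hn0' : (0:ℝ) < (n:ℝ) := by linarith
    set r : ℕ := ⌈(n:ℝ)^a⌉₊ with hrdef
    set t : ℕ := ⌈(n:ℝ)^((1:ℝ)/2)⌉₊ with htdef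
    have hhalf : (n:ℝ)^((1:ℝ)/2) ≤ (n:ℝ)^a :=
      Real.rpow_le_rpow_of_exponent_le hn1' (by norm_num; linarith)
    have hrt : t ≤ r := Nat.ceil_le_ceil hhalf
    have hr : (n:ℝ)^a ≤ (r:ℝ) := Nat.le_ceil _
    have hts : (n:ℝ)^((1:ℝ)/2) ≤ (t:ℝ) := Nat.le_ceil _
    have hts' : (t:ℝ) ≤ (n:ℝ)^((1:ℝ)/2) + 1 :=
      (Nat.ceil_lt_add_one (Real.rpow_nonneg hn0'.le _)).le
    have hs1 : (1:ℝ) ≤ (n:ℝ)^((1:ℝ)/2) := by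
      have h := Real.rpow_le_rpow_of_exponent_le hn1' (by norm_num : (0:ℝ) ≤ (1:ℝ)/2)
      rwa [Real.rpow_zero] at h
    have hna0 : (0:ℝ) ≤ (n:ℝ)^a := Real.rpow_nonneg hn0'.le _
    -- key inequality : L*(t+1) ≤ (c/2) n^a
    have hEV2 : L * ((t:ℝ) + 1) ≤ (c/2) * (n:ℝ)^a := by
      have hid : (n:ℝ)^((1:ℝ)/2) * (n:ℝ)^(a-1/2) = (n:ℝ)^a := by
        rw [← Real.rpow_add hn0']
        norm_num
      have h1 : L * ((t:ℝ) + 1) ≤ 3 * L * (n:ℝ)^((1:ℝ)/2) := by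
        nlinarith [mul_le_mul_of_nonneg_left hts' hL0.le,
          mul_le_mul_of_nonneg_left hs1 hL0.le]
      have h5 : (0:ℝ) ≤ (c/2) * (n:ℝ)^((1:ℝ)/2) :=
        mul_nonneg (by linarith) (by linarith)
      have h4 := mul_le_mul_of_nonneg_right hev2 h5
      have h6 : (6*L/c) * ((c/2) * ((n:ℝ)^((1:ℝ)/2))) = 3*L*(n:ℝ)^((1:ℝ)/2) := by
        field_simp
        ring
      have h2 : 3 * L * (n:ℝ)^((1:ℝ)/2) ≤ (c/2) * (n:ℝ)^a := by
        rw [← hid]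
        nlinarith [h4, h6]
      linarith
    have ht0 : (0:ℝ) ≤ (t:ℝ) := by linarith
    have hEV1 : L * (t:ℝ) ≤ (c/2) * (n:ℝ)^a := by nlinarith
    -- apply main_bound
    have hmb := main_bound a ε hε₀ hε₁ n hn1 (by linarith) r t hrt hr
    refine hmb.trans ?_
    have hLr : L * (n:ℝ)^a ≤ L * (r:ℝ) := mul_le_mul_of_nonneg_left hr hL0.le
    have h2nd : Real.exp (ε * (n:ℝ)^a - L * ((r:ℝ) - t))
        ≤ Real.exp (-(c/2 * (n:ℝ)^a)) := by
      apply Real.exp_le_exp.mpr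
      rw [hcdef]
      nlinarith [hLr, hEV1]
    have h3rd : (2:ℝ)^n * ((2:ℝ)^n * Real.exp ((t:ℝ)/2 *
          (ε * (n:ℝ)^a - L * ((r:ℝ) - t - 1))))
        ≤ Real.exp (Real.log 2 * (2*(n:ℕ)) - (c/4)*(n:ℝ)^((7:ℝ)/6)) := by
      have h2n : (2:ℝ)^n = Real.exp ((n:ℕ) * Real.log 2) := by
        rw [← Real.log_pow, Real.exp_log (by positivity)]
      have hX : ε * (n:ℝ)^a - L * ((r:ℝ) - t - 1) ≤ -(c/2)*(n:ℝ)^a := by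
        rw [hcdef]
        nlinarith [hLr, hEV2]
      have hXneg : ε * (n:ℝ)^a - L * ((r:ℝ) - t - 1) ≤ 0 := by
        nlinarith [mul_nonneg (le_of_lt hc0) hna0]
      have htexp : (t:ℝ)/2 * (ε * (n:ℝ)^a - L * ((r:ℝ) - t - 1))
          ≤ -(c/4)*(n:ℝ)^((7:ℝ)/6) := by
        calc (t:ℝ)/2 * (ε * (n:ℝ)^a - L * ((r:ℝ) - t - 1))
            ≤ (t:ℝ)/2 * (-(c/2)*(n:ℝ)^a) := by
              apply mul_le_mul_of_nonneg_left hX (by linarith : (0:ℝ) ≤ (t:ℝ)/2)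
          _ ≤ ((n:ℝ)^((1:ℝ)/2))/2 * (-(c/2)*(n:ℝ)^a) := by
              apply mul_le_mul_of_nonpos_right _ ?_
              · linarith
              · nlinarith [mul_nonneg (le_of_lt hc0) hna0]
          _ = -(c/4) * ((n:ℝ)^((1:ℝ)/2) * (n:ℝ)^a) := by ring
          _ ≤ -(c/4)*(n:ℝ)^((7:ℝ)/6) := by
              rw [← Real.rpow_add hn0']
              have h76 : (n:ℝ)^((7:ℝ)/6) ≤ (n:ℝ)^((1:ℝ)/2 + a) :=
                Real.rpow_le_rpow_of_exponent_le hn1' (by norm_num; linarith)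
              nlinarith [mul_le_mul_of_nonneg_left h76 (by linarith : (0:ℝ) ≤ c/4)]
      calc (2:ℝ)^n * ((2:ℝ)^n * Real.exp ((t:ℝ)/2 * (ε * (n:ℝ)^a - L * ((r:ℝ) - t - 1))))
          = Real.exp ((n:ℕ) * Real.log 2 + ((n:ℕ) * Real.log 2
              + (t:ℝ)/2 * (ε * (n:ℝ)^a - L * ((r:ℝ) - t - 1)))) := by
            rw [Real.exp_add, Real.exp_add, h2n]
        _ ≤ Real.exp (Real.log 2 * (2*(n:ℕ)) - (c/4)*(n:ℝ)^((7:ℝ)/6)) := by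
            apply Real.exp_le_exp.mpr
            linarith [htexp]
    rw [hGdef]
    simp only []
    linarith [h2nd, h3rd]

end
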